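/- (Relaxed weak growth condition implies linear SGD convergence to a noise ball.) Let g(·,z) be a family of differentiable functions with G(w) := E_z[g(w,z)] μ_g-strongly convex with minimizer w*, and suppose E_z[‖∇g(w,z)‖²] ≤ 2ρ(G(w) − G*) + σ² for all w, where G* = G(w*). For SGD iterates w_{t+1} = w_t − (η̄/ρ)∇g(w_t, z_t) with z_t ~ P_z i.i.d. and η̄ ∈ (0, min{1, ρ/μ_g}], it holds that E[‖w_t − w*‖²] ≤ (1 − η̄μ_g/ρ)^t ‖w_0 − w*‖² + η̄σ²/(ρμ_g). -/

import Mathlib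

open MeasureTheory ProbabilityTheory Filter
open scoped RealInnerProductSpace Topology

set_option linter.unusedSectionVars false
set_option maxHeartbeats 1000000

namespace Stmt8Aux

variable {d : ℕ} {Z : Type*} [MeasurableSpace Z]

/-- deterministic SGD recursion on the canonical space -/
noncomputable def sgdF (g : EuclideanSpace ℝ (Fin d) → Z → ℝ) (c : ℝ)
    (w0 : EuclideanSpace ℝ (Fin d)) : (n : ℕ) → (Fin n → Z) → EuclideanSpace ℝ (Fin d)
  | 0, _ => w0
  | (n+1), v =>
      sgdF g c w0 n (v ∘ Fin.castSucc)
        - c • gradient (fun y => g y (v (Fin.last n))) (sgdF g c w0 n (v ∘ Fin.castSucc))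

lemma sgdF_succ (g : EuclideanSpace ℝ (Fin d) → Z → ℝ) (c : ℝ)
    (w0 : EuclideanSpace ℝ (Fin d)) (n : ℕ) (v : Fin (n+1) → Z) :
    sgdF g c w0 (n+1) v =
      sgdF g c w0 n (v ∘ Fin.castSucc)
        - c • gradient (fun y => g y (v (Fin.last n))) (sgdF g c w0 n (v ∘ Fin.castSucc)) := rfl

/-- difference quotients converge to the gradient -/
lemma tendsto_diffQuot (f : EuclideanSpace ℝ (Fin d) → ℝ) (hf : Differentiable ℝ f)
    (x : EuclideanSpace ℝ (Fin d)) :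
    Tendsto (fun k : ℕ => ∑ i : Fin d,
        (((k : ℝ) + 1) * (f (x + ((k : ℝ) + 1)⁻¹ • EuclideanSpace.basisFun (Fin d) ℝ i) - f x))
          • EuclideanSpace.basisFun (Fin d) ℝ i) atTop (𝓝 (gradient f x)) := by
  classical
  set b := EuclideanSpace.basisFun (Fin d) ℝ with hb
  have hrepr : ∑ i : Fin d, ⟪b i, gradient f x⟫ • b i = gradient f x := b.sum_repr' _
  rw [← hrepr]
  refine tendsto_finset_sum _ (fun i _ => ?_)
  refine Tendsto.smul_const ?_ _
  have hfd : HasFDerivAt f (InnerProductSpace.toDual ℝ _ (gradient f x)) x :=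
    hasGradientAt_iff_hasFDerivAt.mp (hf x).hasGradientAt
  have hline : HasDerivAt (fun t : ℝ => x + t • b i) (b i) 0 := by
    simpa using ((hasDerivAt_id (0:ℝ)).smul_const (b i)).const_add x
  have hφ : HasDerivAt (fun t : ℝ => f (x + t • b i)) (⟪gradient f x, b i⟫) 0 := by
    have h' : HasFDerivAt f (InnerProductSpace.toDual ℝ _ (gradient f x))
        ((fun t : ℝ => x + t • b i) 0) := by simpa using hfd
    have hc := h'.comp_hasDerivAt (0:ℝ) hline
    simpa [InnerProductSpace.toDual_apply_apply, Function.comp_def] using hc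
  rw [hasDerivAt_iff_tendsto_slope] at hφ
  have hseq : Tendsto (fun k : ℕ => ((k : ℝ) + 1)⁻¹) atTop (𝓝[≠] (0:ℝ)) := by
    refine tendsto_nhdsWithin_of_tendsto_nhds_of_eventually_within _ ?_ ?_
    · simpa [one_div] using tendsto_one_div_add_atTop_nhds_zero_nat (𝕜 := ℝ)
    · exact Eventually.of_forall fun k => by
        simp only [Set.mem_compl_iff, Set.mem_singleton_iff]
        positivity
  have hcomp := hφ.comp hseq
  rw [real_inner_comm]
  refine hcomp.congr fun k => ?_
  have hk : ((k:ℝ)+1) ≠ 0 := by positivity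
  have h0 : x + (0:ℝ) • b i = x := by simp
  simp only [Function.comp, slope_def_field, h0]
  field_simp
  ring

/-- every slice of `g` is a.e. strongly measurable -/
lemma g_slice_aesm [Nontrivial (EuclideanSpace ℝ (Fin d))]
    (Pz : Measure Z) (g : EuclideanSpace ℝ (Fin d) → Z → ℝ)
    (G : EuclideanSpace ℝ (Fin d) → ℝ)
    (hG : ∀ w, G w = ∫ ζ, g w ζ ∂Pz) (μg : ℝ) (hμg : 0 < μg)
    (hdiff : ∀ ζ, Differentiable ℝ (fun w => g w ζ))
    (hsc : ∀ w v : EuclideanSpace ℝ (Fin d),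
      G v ≥ G w + ⟪gradient G w, v - w⟫ + μg / 2 * ‖v - w‖ ^ 2) :
    ∀ w, AEStronglyMeasurable (fun ζ => g w ζ) Pz := by
  have hBad : ∀ w : EuclideanSpace ℝ (Fin d),
      ¬ AEStronglyMeasurable (fun ζ => g w ζ) Pz → G w = 0 := by
    intro w hw
    rw [hG w, integral_undef]
    exact fun hI => hw hI.1
  have hemp : interior {w : EuclideanSpace ℝ (Fin d) | G w = 0} = ∅ := by
    by_contra h
    obtain ⟨w, hw⟩ := Set.nonempty_iff_ne_empty.mpr h
    rw [mem_interior_iff_mem_nhds, Metric.mem_nhds_iff] at hw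
    obtain ⟨ε, hε, hball⟩ := hw
    obtain ⟨u0, hu0⟩ := exists_ne (0 : EuclideanSpace ℝ (Fin d))
    have hnu0 : 0 < ‖u0‖ := norm_pos_iff.mpr hu0
    set u := (ε / (2 * ‖u0‖)) • u0 with hu
    have hnu : ‖u‖ = ε / 2 := by
      rw [hu, norm_smul, Real.norm_eq_abs, abs_of_pos (by positivity)]
      field_simp
    have h0 : G w = 0 := hball (Metric.mem_ball_self hε)
    have h1 : G (w + u) = 0 := by
      refine hball ?_
      simp only [Metric.mem_ball, dist_eq_norm, add_sub_cancel_left]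
      rw [hnu]; linarith
    have h2 : G (w - u) = 0 := by
      refine hball ?_
      simp only [Metric.mem_ball, dist_eq_norm, sub_sub_cancel_left, norm_neg]
      rw [hnu]; linarith
    have hs1 := hsc w (w + u)
    have hs2 := hsc w (w - u)
    rw [add_sub_cancel_left] at hs1
    have hwu : w - u - w = -u := by abel
    rw [hwu, inner_neg_right, norm_neg] at hs2
    rw [h0, h1, hnu] at hs1
    rw [h0, h2, hnu] at hs2
    nlinarith [hs1, hs2, mul_pos (by linarith : (0:ℝ) < μg/2) (pow_pos (by linarith : (0:ℝ) < ε/2) 2)]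
  intro w
  have hden : Dense {w : EuclideanSpace ℝ (Fin d) | G w = 0}ᶜ :=
    interior_eq_empty_iff_dense_compl.mp hemp
  have hwcl : w ∈ closure {w : EuclideanSpace ℝ (Fin d) | G w = 0}ᶜ := hden w
  rw [mem_closure_iff_seq_limit] at hwcl
  obtain ⟨uS, huS, hlim⟩ := hwcl
  refine aestronglyMeasurable_of_tendsto_ae (f := fun n ζ => g (uS n) ζ) atTop
    (fun n => ?_) (Eventually.of_forall fun ζ => ?_)
  · by_contra hbad; exact huS n (hBad _ hbad)
  · exact ((hdiff ζ).continuous.tendsto w).comp hlim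

/-- composing `g` with an a.e.-measurable trajectory and a measurable sample map -/
lemma comp_aesm (Pz : Measure Z) (g : EuclideanSpace ℝ (Fin d) → Z → ℝ)
    (hdiff : ∀ ζ, Differentiable ℝ (fun w => g w ζ))
    (hslice : ∀ w, AEStronglyMeasurable (fun ζ => g w ζ) Pz)
    {α : Type*} [MeasurableSpace α] (ν : Measure α)
    (y : α → EuclideanSpace ℝ (Fin d)) (hy : AEMeasurable y ν)
    (ζf : α → Z) (hζf : Measurable ζf)
    (hqmp : Measure.QuasiMeasurePreserving ζf ν Pz) :
    AEMeasurable (fun v => g (y v) (ζf v)) ν := by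
  classical
  set u := TopologicalSpace.denseSeq (EuclideanSpace ℝ (Fin d)) with hu
  have hdense : DenseRange u := TopologicalSpace.denseRange_denseSeq _
  set H : ℕ → Z → ℝ := fun m => (hslice (u m)).mk _ with hH
  have hHmeas : ∀ m, StronglyMeasurable (H m) := fun m => (hslice (u m)).stronglyMeasurable_mk
  have hHae : ∀ᵐ ζ ∂Pz, ∀ m, g (u m) ζ = H m ζ := ae_all_iff.mpr fun m => (hslice (u m)).ae_eq_mk
  have hN : ∀ᵐ v ∂ν, ∀ m, g (u m) (ζf v) = H m (ζf v) := hqmp.ae hHae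
  have hex : ∀ (j : ℕ) (x : EuclideanSpace ℝ (Fin d)), ∃ m, dist (u m) x < 1/(j+1) := by
    intro j x
    obtain ⟨m, hm⟩ := Metric.denseRange_iff.mp hdense x (1/(j+1)) (by positivity)
    exact ⟨m, by rwa [dist_comm]⟩
  have hmj : ∀ j, Measurable fun x : EuclideanSpace ℝ (Fin d) => Nat.find (hex j x) := by
    intro j
    refine measurable_find _ (fun m => ?_)
    have : {x : EuclideanSpace ℝ (Fin d) | dist (u m) x < 1/(j+1)}
        = Metric.ball (u m) (1/(j+1)) := by
      ext x; simp [Metric.mem_ball, dist_comm]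
    rw [this]
    exact Metric.isOpen_ball.measurableSet
  have hφ : ∀ j : ℕ, AEMeasurable (fun v => H (Nat.find (hex j (y v))) (ζf v)) ν := by
    intro j
    have h1 : AEMeasurable (fun v => (ζf v, Nat.find (hex j (y v)))) ν :=
      hζf.aemeasurable.prodMk ((hmj j).comp_aemeasurable hy)
    have h2 : Measurable fun p : Z × ℕ => H p.2 p.1 :=
      measurable_from_prod_countable_left fun m => (hHmeas m).measurable
    exact h2.comp_aemeasurable h1
  refine aemeasurable_of_tendsto_metrizable_ae atTop hφ ?_
  filter_upwards [hN] with v hv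
  have hconv : Tendsto (fun j => u (Nat.find (hex j (y v)))) atTop (𝓝 (y v)) := by
    rw [tendsto_iff_dist_tendsto_zero]
    refine squeeze_zero (fun j => dist_nonneg) (fun j => (Nat.find_spec (hex j (y v))).le) ?_
    exact tendsto_one_div_add_atTop_nhds_zero_nat
  have hcont := ((hdiff (ζf v)).continuous.tendsto (y v)).comp hconv
  exact hcont.congr fun j => hv _

lemma comp_grad_aesm (Pz : Measure Z) (g : EuclideanSpace ℝ (Fin d) → Z → ℝ)
    (hdiff : ∀ ζ, Differentiable ℝ (fun w => g w ζ))
    (hslice : ∀ w, AEStronglyMeasurable (fun ζ => g w ζ) Pz)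
    {α : Type*} [MeasurableSpace α] (ν : Measure α)
    (y : α → EuclideanSpace ℝ (Fin d)) (hy : AEMeasurable y ν)
    (ζf : α → Z) (hζf : Measurable ζf)
    (hqmp : Measure.QuasiMeasurePreserving ζf ν Pz) :
    AEMeasurable (fun v => gradient (fun x => g x (ζf v)) (y v)) ν := by
  have hDq : ∀ k : ℕ, AEMeasurable (fun v => ∑ i : Fin d,
      (((k : ℝ) + 1) * (g (y v + ((k : ℝ) + 1)⁻¹ • EuclideanSpace.basisFun (Fin d) ℝ i) (ζf v)
        - g (y v) (ζf v))) • EuclideanSpace.basisFun (Fin d) ℝ i) ν := by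
    intro k
    refine Finset.aemeasurable_fun_sum _ (fun i _ => ?_)
    have h1 : AEMeasurable (fun v =>
        g (y v + ((k : ℝ) + 1)⁻¹ • EuclideanSpace.basisFun (Fin d) ℝ i) (ζf v)) ν :=
      comp_aesm Pz g hdiff hslice ν _ (hy.add_const _) ζf hζf hqmp
    have h2 : AEMeasurable (fun v => g (y v) (ζf v)) ν :=
      comp_aesm Pz g hdiff hslice ν y hy ζf hζf hqmp
    exact (((h1.sub h2).const_mul _).smul_const _)
  exact aemeasurable_of_tendsto_metrizable_ae atTop hDq
    (Eventually.of_forall fun v => tendsto_diffQuot (fun x => g x (ζf v)) (hdiff (ζf v)) (y v))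

lemma sgdF_aemeasurable (Pz : Measure Z) [IsProbabilityMeasure Pz]
    (g : EuclideanSpace ℝ (Fin d) → Z → ℝ) (c : ℝ) (w0 : EuclideanSpace ℝ (Fin d))
    (hdiff : ∀ ζ, Differentiable ℝ (fun w => g w ζ))
    (hslice : ∀ w, AEStronglyMeasurable (fun ζ => g w ζ) Pz) :
    ∀ t, AEMeasurable (sgdF g c w0 t) (Measure.pi (fun _ : Fin t => Pz)) := by
  intro t
  induction t with
  | zero => exact aemeasurable_const
  | succ t ih =>
    set e := MeasurableEquiv.piFinSuccAbove (fun _ : Fin (t+1) => Z) (Fin.last t) with he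
    have hMP : MeasurePreserving e (Measure.pi (fun _ : Fin (t+1) => Pz))
        (Pz.prod (Measure.pi (fun _ : Fin t => Pz))) :=
      measurePreserving_piFinSuccAbove (fun _ => Pz) (Fin.last t)
    have hsnd : Measure.QuasiMeasurePreserving (fun v : Fin (t+1) → Z => (e v).2)
        (Measure.pi (fun _ : Fin (t+1) => Pz)) (Measure.pi (fun _ : Fin t => Pz)) :=
      Measure.quasiMeasurePreserving_snd.comp hMP.quasiMeasurePreserving
    have hfst : Measure.QuasiMeasurePreserving (fun v : Fin (t+1) → Z => (e v).1)
        (Measure.pi (fun _ : Fin (t+1) => Pz)) Pz :=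
      Measure.quasiMeasurePreserving_fst.comp hMP.quasiMeasurePreserving
    have hcastSucc : ∀ v : Fin (t+1) → Z, v ∘ Fin.castSucc = (e v).2 := by
      intro v; funext j
      simp [he, MeasurableEquiv.piFinSuccAbove, Fin.succAbove_last, Fin.init]
    have hlast : ∀ v : Fin (t+1) → Z, v (Fin.last t) = (e v).1 := by
      intro v; simp [he, MeasurableEquiv.piFinSuccAbove]
    have hx : AEMeasurable (fun v : Fin (t+1) → Z => sgdF g c w0 t (v ∘ Fin.castSucc))
        (Measure.pi (fun _ : Fin (t+1) => Pz)) := by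
      simp_rw [hcastSucc]
      exact ih.comp_quasiMeasurePreserving hsnd
    have hζf : Measurable (fun v : Fin (t+1) → Z => v (Fin.last t)) := measurable_pi_apply _
    have hqmp : Measure.QuasiMeasurePreserving (fun v : Fin (t+1) → Z => v (Fin.last t))
        (Measure.pi (fun _ : Fin (t+1) => Pz)) Pz := by
      have : (fun v : Fin (t+1) → Z => v (Fin.last t)) = fun v => (e v).1 := by
        funext v; exact hlast v
      rw [this]; exact hfst
    have hgrad := comp_grad_aesm Pz g hdiff hslice _
      (fun v : Fin (t+1) → Z => sgdF g c w0 t (v ∘ Fin.castSucc)) hx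
      (fun v => v (Fin.last t)) hζf hqmp
    show AEMeasurable (fun v : Fin (t+1) → Z => sgdF g c w0 t (v ∘ Fin.castSucc)
        - c • gradient (fun y => g y (v (Fin.last t))) (sgdF g c w0 t (v ∘ Fin.castSucc)))
      (Measure.pi (fun _ : Fin (t+1) => Pz))
    exact hx.sub (hgrad.const_smul c)

lemma one_step (Pz : Measure Z) [IsProbabilityMeasure Pz]
    (g : EuclideanSpace ℝ (Fin d) → Z → ℝ) (G : EuclideanSpace ℝ (Fin d) → ℝ)
    (μg ρ σ ηbar : ℝ) (hμg : 0 < μg) (hρ : 0 < ρ)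
    (hηbar : 0 < ηbar) (hη1 : ηbar ≤ 1) (hη2 : ηbar * μg ≤ ρ)
    (hunbiased : ∀ w, ∫ ζ, gradient (fun v => g v ζ) w ∂Pz = gradient G w)
    (hsc : ∀ w v : EuclideanSpace ℝ (Fin d),
      G v ≥ G w + ⟪gradient G w, v - w⟫ + μg / 2 * ‖v - w‖ ^ 2)
    (wstar : EuclideanSpace ℝ (Fin d)) (hmin : ∀ w, G wstar ≤ G w)
    (hrwgc : ∀ w, ∫ ζ, ‖gradient (fun v => g v ζ) w‖ ^ 2 ∂Pz ≤
      2 * ρ * (G w - G wstar) + σ ^ 2)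
    (x : EuclideanSpace ℝ (Fin d)) :
    ∫ ζ, ‖x - (ηbar / ρ) • gradient (fun v => g v ζ) x - wstar‖ ^ 2 ∂Pz ≤
      (1 - ηbar * μg / ρ) * ‖x - wstar‖ ^ 2 + (ηbar / ρ) ^ 2 * σ ^ 2 := by
  set c := ηbar / ρ with hcdef
  have hc : 0 < c := div_pos hηbar hρ
  have hκ : 0 ≤ 1 - ηbar * μg / ρ := by
    rw [sub_nonneg]
    exact (div_le_one hρ).mpr hη2
  by_cases hv : Integrable (fun ζ => gradient (fun y => g y ζ) x) Pz
  · by_cases hI : Integrable (fun ζ => ‖x - c • gradient (fun y => g y ζ) x - wstar‖ ^ 2) Pz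
    · -- main case
      have hVM : AEStronglyMeasurable (fun ζ => ‖gradient (fun y => g y ζ) x‖ ^ 2) Pz :=
        (continuous_pow 2).comp_aestronglyMeasurable hv.aestronglyMeasurable.norm
      have hv2 : Integrable (fun ζ => ‖gradient (fun y => g y ζ) x‖ ^ 2) Pz := by
        refine Integrable.mono'
          (((integrable_const (‖x - wstar‖ ^ 2)).add hI).const_mul (2 / c ^ 2)) hVM ?_
        refine Eventually.of_forall fun ζ => ?_
        set V := gradient (fun y => g y ζ) x
        have htr : c * ‖V‖ ≤ ‖x - wstar‖ + ‖x - c • V - wstar‖ := by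
          have h1 : x - c • V - wstar = (x - wstar) - c • V := by abel
          calc c * ‖V‖ = ‖c • V‖ := by
                rw [norm_smul, Real.norm_eq_abs, abs_of_pos hc]
            _ = ‖(x - wstar) - ((x - wstar) - c • V)‖ := by rw [sub_sub_cancel]
            _ ≤ ‖x - wstar‖ + ‖(x - wstar) - c • V‖ := norm_sub_le _ _
            _ = ‖x - wstar‖ + ‖x - c • V - wstar‖ := by rw [← h1]
        have hA : (0:ℝ) ≤ ‖x - wstar‖ := norm_nonneg _
        have hB : (0:ℝ) ≤ ‖x - c • V - wstar‖ := norm_nonneg _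
        have hVn : (0:ℝ) ≤ ‖V‖ := norm_nonneg _
        rw [Real.norm_eq_abs, abs_of_nonneg (by positivity)]
        simp only [Pi.add_apply]
        show ‖V‖ ^ 2 ≤ 2 / c ^ 2 * (‖x - wstar‖ ^ 2 + ‖x - c • V - wstar‖ ^ 2)
        have hmain : c ^ 2 * ‖V‖ ^ 2 ≤ 2 * (‖x - wstar‖ ^ 2 + ‖x - c • V - wstar‖ ^ 2) := by
          have hsq := mul_le_mul htr htr (by positivity) (by positivity)
          nlinarith [hsq, sq_nonneg (‖x - wstar‖ - ‖x - c • V - wstar‖)]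
        calc ‖V‖ ^ 2 = (c ^ 2 * ‖V‖ ^ 2) / c ^ 2 := by field_simp
          _ ≤ (2 * (‖x - wstar‖ ^ 2 + ‖x - c • V - wstar‖ ^ 2)) / c ^ 2 :=
              (div_le_div_iff_of_pos_right (by positivity)).mpr hmain
          _ = 2 / c ^ 2 * (‖x - wstar‖ ^ 2 + ‖x - c • V - wstar‖ ^ 2) := by ring
      have hinner : Integrable (fun ζ => ⟪x - wstar, gradient (fun y => g y ζ) x⟫) Pz :=
        hv.const_inner _
      have hexp : ∀ ζ, ‖x - c • gradient (fun y => g y ζ) x - wstar‖ ^ 2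
          = ‖x - wstar‖ ^ 2 - 2 * c * ⟪x - wstar, gradient (fun y => g y ζ) x⟫
            + c ^ 2 * ‖gradient (fun y => g y ζ) x‖ ^ 2 := by
        intro ζ
        rw [sub_right_comm, norm_sub_sq_real, real_inner_smul_right, norm_smul,
          Real.norm_eq_abs, mul_pow, sq_abs]
        ring
      simp_rw [hexp]
      have e3 : Integrable (fun ζ => 2 * c * ⟪x - wstar, gradient (fun y => g y ζ) x⟫) Pz := by
        exact hinner.const_mul (2 * c)
      have e1 : Integrable (fun ζ =>
          ‖x - wstar‖ ^ 2 - 2 * c * ⟪x - wstar, gradient (fun y => g y ζ) x⟫) Pz := by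
        exact (integrable_const _).sub e3
      have e2 : Integrable (fun ζ => c ^ 2 * ‖gradient (fun y => g y ζ) x‖ ^ 2) Pz := by
        exact hv2.const_mul _
      rw [integral_add e1 e2, integral_sub (integrable_const _) e3,
        integral_const, integral_const_mul, integral_const_mul,
        integral_inner hv, hunbiased x]
      simp only [probReal_univ, one_smul]
      have h1 : (G x - G wstar) + μg / 2 * ‖x - wstar‖ ^ 2 ≤ ⟪x - wstar, gradient G x⟫ := by
        have h := hsc x wstar
        have hsub : wstar - x = -(x - wstar) := by abel
        rw [hsub, inner_neg_right, norm_neg] at h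
        rw [real_inner_comm]
        linarith
      have h2 := hrwgc x
      have h3 : 0 ≤ G x - G wstar := sub_nonneg.mpr (hmin x)
      have hcρ : c * ρ = ηbar := div_mul_cancel₀ _ hρ.ne'
      have hcμ : ηbar * μg / ρ = c * μg := by rw [hcdef]; ring
      rw [hcdef] at *
      have s1 := mul_le_mul_of_nonneg_left h1 (by positivity : (0:ℝ) ≤ 2 * (ηbar / ρ))
      have s2' : (ηbar / ρ) ^ 2 * (∫ ζ, ‖gradient (fun v => g v ζ) x‖ ^ 2 ∂Pz) ≤
          2 * (ηbar / ρ) * ηbar * (G x - G wstar) + (ηbar / ρ) ^ 2 * σ ^ 2 := by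
        have heq : (ηbar / ρ) ^ 2 * (2 * ρ * (G x - G wstar) + σ ^ 2) =
            2 * (ηbar / ρ) * ηbar * (G x - G wstar) + (ηbar / ρ) ^ 2 * σ ^ 2 := by
          field_simp
        have := mul_le_mul_of_nonneg_left h2 (sq_nonneg (ηbar / ρ))
        linarith
      have s3 : 0 ≤ 2 * (ηbar / ρ) * (G x - G wstar) * (1 - ηbar) :=
        mul_nonneg (mul_nonneg (by positivity) h3) (by linarith)
      rw [hcμ]
      linarith [s1, s2', s3]
    · rw [integral_undef hI]
      have := sq_nonneg σ
      positivity
  · -- gradient not integrable ⇒ x = wstar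
    have hgx : gradient G x = 0 := by rw [← hunbiased x]; exact integral_undef hv
    have hxw : x = wstar := by
      have h := hsc x wstar
      rw [hgx, inner_zero_left] at h
      have h2 := hmin x
      have h3 : ‖wstar - x‖ ^ 2 ≤ 0 := by nlinarith
      have h4 : ‖wstar - x‖ = 0 := by nlinarith [sq_nonneg ‖wstar - x‖, norm_nonneg (wstar - x)]
      have h5 : wstar - x = 0 := norm_eq_zero.mp h4
      have := sub_eq_zero.mp h5
      exact this.symm
    subst hxw
    have hW : ∀ ζ, ‖x - c • gradient (fun y => g y ζ) x - x‖ ^ 2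
        = c ^ 2 * ‖gradient (fun y => g y ζ) x‖ ^ 2 := by
      intro ζ
      rw [sub_sub_cancel_left, norm_neg, norm_smul, Real.norm_eq_abs, mul_pow, sq_abs]
    calc ∫ ζ, ‖x - c • gradient (fun y => g y ζ) x - x‖ ^ 2 ∂Pz
        = c ^ 2 * ∫ ζ, ‖gradient (fun y => g y ζ) x‖ ^ 2 ∂Pz := by
          simp_rw [hW]; exact integral_const_mul _ _
      _ ≤ c ^ 2 * σ ^ 2 := by
          have h2 := hrwgc x
          simp only [sub_self, mul_zero, zero_add] at h2
          exact mul_le_mul_of_nonneg_left h2 (sq_nonneg c)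
      _ ≤ (1 - ηbar * μg / ρ) * ‖x - x‖ ^ 2 + (ηbar / ρ) ^ 2 * σ ^ 2 := by
          simp [hcdef]

end Stmt8Aux

open Stmt8Aux

/-- **Linear convergence of constant step-size SGD to a noise ball under the
relaxed weak growth condition (Theorem 2, Gower et al.).** -/
theorem stmt_8 {d : ℕ} {Ω Z : Type*} [MeasurableSpace Ω] [MeasurableSpace Z]
    (Pr : Measure Ω) [IsProbabilityMeasure Pr]
    (Pz : Measure Z) [IsProbabilityMeasure Pz]
    (g : EuclideanSpace ℝ (Fin d) → Z → ℝ)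
    (G : EuclideanSpace ℝ (Fin d) → ℝ)
    (hG : ∀ w, G w = ∫ ζ, g w ζ ∂Pz)
    (μg ρ σ ηbar : ℝ) (hμg : 0 < μg) (hρ : 0 < ρ) (hσ : 0 ≤ σ)
    (hηbar : 0 < ηbar) (hηbar' : ηbar ≤ min 1 (ρ / μg))
    -- differentiability and unbiasedness of the stochastic gradients
    (hdiff : ∀ ζ, Differentiable ℝ (fun w => g w ζ))
    (hunbiased : ∀ w, ∫ ζ, gradient (fun v => g v ζ) w ∂Pz = gradient G w)
    -- `μ_g`-strong convexity of `G`
    (hsc : ∀ w v : EuclideanSpace ℝ (Fin d),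
      G v ≥ G w + ⟪gradient G w, v - w⟫ + μg / 2 * ‖v - w‖ ^ 2)
    -- `w*` minimizes `G`
    (wstar : EuclideanSpace ℝ (Fin d)) (hmin : ∀ w, G wstar ≤ G w)
    -- relaxed weak growth condition
    (hrwgc : ∀ w, ∫ ζ, ‖gradient (fun v => g v ζ) w‖ ^ 2 ∂Pz ≤
      2 * ρ * (G w - G wstar) + σ ^ 2)
    -- i.i.d. samples `z_t ∼ P_z`
    (z : ℕ → Ω → Z) (hzmeas : ∀ t, Measurable (z t))
    (hindep : iIndepFun z Pr)
    (hdist : ∀ t, Measure.map (z t) Pr = Pz)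
    -- SGD iterates with step size `η̄/ρ`, started at the deterministic point `w₀`
    (w : ℕ → Ω → EuclideanSpace ℝ (Fin d)) (w0 : EuclideanSpace ℝ (Fin d))
    (hw0 : ∀ ω, w 0 ω = w0)
    (hstep : ∀ t ω, w (t + 1) ω =
      w t ω - (ηbar / ρ) • gradient (fun v => g v (z t ω)) (w t ω))
    -- integrability of the squared errors
    (hint : ∀ t, Integrable (fun ω => ‖w t ω - wstar‖ ^ 2) Pr) :
    ∀ t, (∫ ω, ‖w t ω - wstar‖ ^ 2 ∂Pr) ≤
      (1 - ηbar * μg / ρ) ^ t * ‖w0 - wstar‖ ^ 2 + ηbar * σ ^ 2 / (ρ * μg) := by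
  have hη1 : ηbar ≤ 1 := le_trans hηbar' (min_le_left _ _)
  have hη2 : ηbar * μg ≤ ρ := by
    have := le_trans hηbar' (min_le_right 1 (ρ / μg))
    exact (le_div_iff₀ hμg).mp this
  have hκ : 0 ≤ 1 - ηbar * μg / ρ := by
    rw [sub_nonneg]; exact (div_le_one hρ).mpr hη2
  have hS : 0 ≤ ηbar * σ ^ 2 / (ρ * μg) := by positivity
  rcases subsingleton_or_nontrivial (EuclideanSpace ℝ (Fin d)) with hsub | hnt
  · intro t
    have h0 : ∀ ω, w t ω - wstar = 0 := fun ω => Subsingleton.elim _ _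
    simp only [h0, norm_zero]
    rw [show (fun (_ : Ω) => (0:ℝ) ^ 2) = fun _ => (0:ℝ) by funext; ring]
    rw [integral_zero]
    positivity
  · -- main branch
    have hslice := g_slice_aesm Pz g G hG μg hμg hdiff hsc
    have hAE := sgdF_aemeasurable Pz g (ηbar / ρ) w0 hdiff hslice
    set Y : (t : ℕ) → Ω → (Fin t → Z) := fun t ω i => z i ω with hYdef
    have hY : ∀ t, Measurable (Y t) := fun t => measurable_pi_lambda _ (fun i => hzmeas i)
    -- trajectory identification
    have hwF : ∀ t ω, w t ω = sgdF g (ηbar / ρ) w0 t (Y t ω) := by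
      intro t
      induction t with
      | zero => intro ω; rw [hw0 ω]; rfl
      | succ t ih =>
        intro ω
        rw [hstep t ω, ih ω]
        have hcomp : (Y (t+1) ω) ∘ Fin.castSucc = Y t ω := by
          funext i; simp [hYdef]
        have hlast : (Y (t+1) ω) (Fin.last t) = z t ω := by simp [hYdef]
        show _ = sgdF g (ηbar / ρ) w0 t ((Y (t+1) ω) ∘ Fin.castSucc)
          - (ηbar / ρ) • gradient (fun y => g y ((Y (t+1) ω) (Fin.last t)))
              (sgdF g (ηbar / ρ) w0 t ((Y (t+1) ω) ∘ Fin.castSucc))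
        rw [hcomp, hlast]
    -- law of the sample vector
    have hlaw : ∀ t, Measure.map (Y t) Pr = Measure.pi (fun _ : Fin t => Pz) := by
      intro t
      refine (Measure.pi_eq ?_).symm
      intro s hs
      rw [Measure.map_apply (hY t) (MeasurableSet.univ_pi hs)]
      classical
      set s' : ℕ → Set Z := fun n => if h : n < t then s ⟨n, h⟩ else Set.univ with hs'
      have hpre : (Y t) ⁻¹' (Set.pi Set.univ s) = ⋂ n ∈ Finset.range t, z n ⁻¹' s' n := by
        ext ω
        simp only [Set.mem_preimage, Set.mem_pi, Set.mem_univ, forall_true_left,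
          Set.mem_iInter, Finset.mem_range]
        constructor
        · intro h n hn
          have := h ⟨n, hn⟩
          simpa [hs', dif_pos hn] using this
        · intro h i
          have := h i.1 i.2
          simpa [hs', dif_pos i.2] using this
      rw [hpre]
      rw [hindep.measure_inter_preimage_eq_mul (Finset.range t)
        (fun n hn => by
          simp only [hs', Finset.mem_range] at hn ⊢
          rw [dif_pos hn]; exact hs _)]
      have hterm : ∀ n ∈ Finset.range t, Pr (z n ⁻¹' s' n) = Pz (s' n) := by
        intro n hn
        simp only [Finset.mem_range] at hn
        rw [← hdist n, Measure.map_apply (hzmeas n)]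
        simp only [hs']
        rw [dif_pos hn]
        exact hs _
      rw [Finset.prod_congr rfl hterm]
      rw [← Fin.prod_univ_eq_prod_range (fun n => Pz (s' n)) t]
      refine Finset.prod_congr rfl (fun i _ => ?_)
      simp only [hs', i.2, dif_pos]
    -- a.e. strong measurability of the squared error on the canonical space
    have hAESM : ∀ t, AEStronglyMeasurable
        (fun v => ‖sgdF g (ηbar / ρ) w0 t v - wstar‖ ^ 2)
        (Measure.pi (fun _ : Fin t => Pz)) := by
      intro t
      exact (continuous_pow 2).comp_aestronglyMeasurable
        ((hAE t).sub aemeasurable_const).aestronglyMeasurable.norm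
    -- transfer of the integrals
    have hA : ∀ t, (∫ ω, ‖w t ω - wstar‖ ^ 2 ∂Pr)
        = ∫ v, ‖sgdF g (ηbar / ρ) w0 t v - wstar‖ ^ 2 ∂(Measure.pi (fun _ : Fin t => Pz)) := by
      intro t
      calc ∫ ω, ‖w t ω - wstar‖ ^ 2 ∂Pr
          = ∫ ω, (fun v => ‖sgdF g (ηbar / ρ) w0 t v - wstar‖ ^ 2) (Y t ω) ∂Pr := by
            exact integral_congr_ae (Eventually.of_forall fun ω =>
              congrArg (fun x : EuclideanSpace ℝ (Fin d) => ‖x - wstar‖ ^ 2) (hwF t ω))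
        _ = ∫ v, ‖sgdF g (ηbar / ρ) w0 t v - wstar‖ ^ 2 ∂(Measure.map (Y t) Pr) :=
            (integral_map (hY t).aemeasurable (by rw [hlaw t]; exact hAESM t)).symm
        _ = _ := by rw [hlaw t]
    have hIntF : ∀ t, Integrable (fun v => ‖sgdF g (ηbar / ρ) w0 t v - wstar‖ ^ 2)
        (Measure.pi (fun _ : Fin t => Pz)) := by
      intro t
      rw [← hlaw t]
      rw [integrable_map_measure (by rw [hlaw t]; exact hAESM t) (hY t).aemeasurable]
      have heq : ((fun v => ‖sgdF g (ηbar / ρ) w0 t v - wstar‖ ^ 2) ∘ (Y t))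
          = fun ω => ‖w t ω - wstar‖ ^ 2 := by
        funext ω
        simp only [Function.comp]
        rw [← hwF t ω]
      rw [heq]
      exact hint t
    -- one-step recurrence
    have hrec : ∀ t, (∫ v, ‖sgdF g (ηbar / ρ) w0 (t+1) v - wstar‖ ^ 2
          ∂(Measure.pi (fun _ : Fin (t+1) => Pz)))
        ≤ (1 - ηbar * μg / ρ) * (∫ v, ‖sgdF g (ηbar / ρ) w0 t v - wstar‖ ^ 2
            ∂(Measure.pi (fun _ : Fin t => Pz))) + (ηbar / ρ) ^ 2 * σ ^ 2 := by
      intro t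
      set e := MeasurableEquiv.piFinSuccAbove (fun _ : Fin (t+1) => Z) (Fin.last t) with he
      have hMP : MeasurePreserving e (Measure.pi (fun _ : Fin (t+1) => Pz))
          (Pz.prod (Measure.pi (fun _ : Fin t => Pz))) :=
        measurePreserving_piFinSuccAbove (fun _ => Pz) (Fin.last t)
      have hMPs : MeasurePreserving e.symm (Pz.prod (Measure.pi (fun _ : Fin t => Pz)))
          (Measure.pi (fun _ : Fin (t+1) => Pz)) := MeasurePreserving.symm _ hMP
      have hkey : ∀ (a : Z) (b : Fin t → Z), sgdF g (ηbar / ρ) w0 (t+1) (e.symm (a, b)) =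
          sgdF g (ηbar / ρ) w0 t b
            - (ηbar / ρ) • gradient (fun y => g y a) (sgdF g (ηbar / ρ) w0 t b) := by
        intro a b
        have h1 : (e.symm (a, b)) ∘ Fin.castSucc = b := by
          funext j
          show (e.symm (a, b)) (Fin.castSucc j) = b j
          rw [show Fin.castSucc j = (Fin.last t).succAbove j by rw [Fin.succAbove_last]]
          simp [he, MeasurableEquiv.piFinSuccAbove]
        have h2 : e.symm (a, b) (Fin.last t) = a := by
          simp [he, MeasurableEquiv.piFinSuccAbove]
        show sgdF g (ηbar / ρ) w0 t ((e.symm (a, b)) ∘ Fin.castSucc)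
            - (ηbar / ρ) • gradient (fun y => g y ((e.symm (a, b)) (Fin.last t)))
              (sgdF g (ηbar / ρ) w0 t ((e.symm (a, b)) ∘ Fin.castSucc)) = _
        rw [h1, h2]
      have hq : Integrable
          (fun p : Z × (Fin t → Z) => ‖sgdF g (ηbar / ρ) w0 (t+1) (e.symm p) - wstar‖ ^ 2)
          (Pz.prod (Measure.pi (fun _ : Fin t => Pz))) :=
        (hMPs.integrable_comp_emb e.symm.measurableEmbedding).mpr (hIntF (t+1))
      calc ∫ v, ‖sgdF g (ηbar / ρ) w0 (t+1) v - wstar‖ ^ 2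
            ∂(Measure.pi (fun _ : Fin (t+1) => Pz))
          = ∫ p, ‖sgdF g (ηbar / ρ) w0 (t+1) (e.symm p) - wstar‖ ^ 2
              ∂(Pz.prod (Measure.pi (fun _ : Fin t => Pz))) := (hMPs.integral_comp' _).symm
        _ = ∫ b, ∫ a, ‖sgdF g (ηbar / ρ) w0 (t+1) (e.symm (a, b)) - wstar‖ ^ 2 ∂Pz
              ∂(Measure.pi (fun _ : Fin t => Pz)) := integral_prod_symm _ hq
        _ ≤ ∫ b, ((1 - ηbar * μg / ρ) * ‖sgdF g (ηbar / ρ) w0 t b - wstar‖ ^ 2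
              + (ηbar / ρ) ^ 2 * σ ^ 2) ∂(Measure.pi (fun _ : Fin t => Pz)) := by
            refine integral_mono_of_nonneg ?_ (((hIntF t).const_mul _).add (integrable_const _)) ?_
            · exact Eventually.of_forall fun b => integral_nonneg fun a => by positivity
            · refine Eventually.of_forall fun b => ?_
              have heq2 : (fun a => ‖sgdF g (ηbar / ρ) w0 (t+1) (e.symm (a, b)) - wstar‖ ^ 2)
                  = fun a => ‖sgdF g (ηbar / ρ) w0 t b
                      - (ηbar / ρ) • gradient (fun y => g y a) (sgdF g (ηbar / ρ) w0 t b)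
                      - wstar‖ ^ 2 := by
                funext a; rw [hkey a b]
              simp only []
              rw [heq2]
              exact one_step Pz g G μg ρ σ ηbar hμg hρ hηbar hη1 hη2 hunbiased hsc wstar
                hmin hrwgc (sgdF g (ηbar / ρ) w0 t b)
        _ = (1 - ηbar * μg / ρ) * (∫ v, ‖sgdF g (ηbar / ρ) w0 t v - wstar‖ ^ 2
              ∂(Measure.pi (fun _ : Fin t => Pz))) + (ηbar / ρ) ^ 2 * σ ^ 2 := by
            rw [integral_add ((hIntF t).const_mul _) (integrable_const _),
              integral_const_mul, integral_const]
            simp [measure_univ]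
    -- final induction
    intro t
    induction t with
    | zero =>
      have h0 : (∫ ω, ‖w 0 ω - wstar‖ ^ 2 ∂Pr) = ‖w0 - wstar‖ ^ 2 := by
        simp_rw [hw0]
        rw [integral_const]
        simp [measure_univ]
      rw [h0, pow_zero, one_mul]
      linarith
    | succ t ih =>
      have hstep2 := hrec t
      rw [← hA (t+1), ← hA t] at hstep2
      have hfac : (ηbar / ρ) ^ 2 * σ ^ 2 = (ηbar * μg / ρ) * (ηbar * σ ^ 2 / (ρ * μg)) := by
        field_simp
      calc ∫ ω, ‖w (t+1) ω - wstar‖ ^ 2 ∂Pr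
          ≤ (1 - ηbar * μg / ρ) * (∫ ω, ‖w t ω - wstar‖ ^ 2 ∂Pr)
            + (ηbar / ρ) ^ 2 * σ ^ 2 := hstep2
        _ ≤ (1 - ηbar * μg / ρ) * ((1 - ηbar * μg / ρ) ^ t * ‖w0 - wstar‖ ^ 2
              + ηbar * σ ^ 2 / (ρ * μg)) + (ηbar / ρ) ^ 2 * σ ^ 2 := by
            have := mul_le_mul_of_nonneg_left ih hκ
            linarith
        _ = (1 - ηbar * μg / ρ) ^ (t+1) * ‖w0 - wstar‖ ^ 2
              + ((1 - ηbar * μg / ρ) * (ηbar * σ ^ 2 / (ρ * μg)) + (ηbar / ρ) ^ 2 * σ ^ 2) := by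
            ring
        _ = (1 - ηbar * μg / ρ) ^ (t+1) * ‖w0 - wstar‖ ^ 2 + ηbar * σ ^ 2 / (ρ * μg) := by
            rw [hfac]
            ring
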